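/- The entropies of the stationary representations of the absorbed and killed chains satisfy h(𝕐^{(𝒜)}) = h(𝕐^{(𝒦)}) + ∑_{i∈I} μ(i) P(i,ℰ) H(D^i), where H(D^i) = -∑_{δ∈ℰ} (P(i,δ)/P(i,ℰ)) log(P(i,δ)/P(i,ℰ)) (with the convention that the term vanishes when P(i,ℰ)=0). -/

import Mathlib

open Finset Matrix Real


private lemma nml_mul' (x y : ℝ) :
    negMulLog (x * y) = y * negMulLog x + x * negMulLog y := by
  rcases eq_or_ne x 0 with hx | hx
  · simp [hx, negMulLog]
  rcases eq_or_ne y 0 with hy | hy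
  · simp [hy, negMulLog]
  simp only [negMulLog, Real.log_mul hx hy]
  ring

private lemma div_entropy' {E : Type*} [Fintype E] (p : E → ℝ) (hp : ∀ δ, 0 ≤ p δ) :
    (∑ ε, p ε) * ∑ δ, negMulLog (p δ / ∑ ε, p ε)
      = (∑ δ, negMulLog (p δ)) - negMulLog (∑ ε, p ε) := by
  rcases eq_or_ne (∑ ε, p ε) 0 with h0 | h0
  · have hz : ∀ δ ∈ Finset.univ, p δ = 0 :=
      (Finset.sum_eq_zero_iff_of_nonneg (fun i _ => hp i)).mp h0
    rw [h0]
    simp only [zero_mul, negMulLog_zero, sub_zero]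
    exact (Finset.sum_eq_zero fun δ _ => by
      rw [hz δ (Finset.mem_univ δ), negMulLog_zero]).symm
  · rw [Finset.mul_sum]
    have key : ∀ δ, (∑ ε, p ε) * negMulLog (p δ / ∑ ε, p ε)
        = negMulLog (p δ) + p δ * Real.log (∑ ε, p ε) := by
      intro δ
      rw [div_eq_mul_inv, nml_mul']
      have h1 : negMulLog (∑ ε, p ε)⁻¹ = (∑ ε, p ε)⁻¹ * Real.log (∑ ε, p ε) := by
        simp [negMulLog, Real.log_inv]
      rw [h1]
      field_simp
    simp_rw [key]
    rw [Finset.sum_add_distrib, ← Finset.sum_mul]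
    simp [negMulLog]

/-- h(𝕐^{(𝒜)}) = h(𝕐^{(𝒦)}) + ∑_i μ(i)P(i,ℰ)H(D^i), where
H(D^i) = -∑_δ (P(i,δ)/P(i,ℰ))log(P(i,δ)/P(i,ℰ)) (the term vanishes when P(i,ℰ)=0;
convention 0 log 0 = 0, division by 0 gives 0). -/
theorem absorbed_killed_entropy_difference {I E : Type*} [Fintype I] [Fintype E]
    [DecidableEq I] [DecidableEq E] [Nonempty I] [Nonempty E]
    (P : Matrix (I ⊕ E) (I ⊕ E) ℝ)
    (hP0 : ∀ a b, 0 ≤ P a b)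
    (hP1 : ∀ a, ∑ b, P a b = 1)
    (habs : ∀ (ε : E) (b : I ⊕ E), P (Sum.inr ε) b = if b = Sum.inr ε then 1 else 0)
    (hirr : ∀ i j : I, ∃ n : ℕ, 0 < ((P.submatrix Sum.inl Sum.inl) ^ n) i j)
    (hsub : 0 < ∑ i : I, ∑ ε : E, P (Sum.inl i) (Sum.inr ε))
    (μ : I → ℝ) (hμ0 : ∀ i, 0 ≤ μ i) (hμ1 : ∑ i, μ i = 1)
    (γ : ℝ) (hγ : 0 < γ ∧ γ < 1)
    (hqsd : μ ᵥ* (P.submatrix Sum.inl Sum.inl) = γ • μ)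
    (K : I × I × Bool → I × I × Bool → ℝ)
    (hK : ∀ (i j l k : I) (a b : Bool),
      K (i, j, a) (l, k, b)
        = if l = j then
            (if b then P (Sum.inl j) (Sum.inl k)
             else (∑ ε : E, P (Sum.inl j) (Sum.inr ε)) * μ k)
          else 0)
    (ζ : I × I × Bool → ℝ)
    (hζ : ∀ (i j : I) (a : Bool),
      ζ (i, j, a)
        = if a then μ i * P (Sum.inl i) (Sum.inl j)
          else μ i * (∑ ε : E, P (Sum.inl i) (Sum.inr ε)) * μ j)
    (A : I × I × Option E → I × I × Option E → ℝ)
    (hA : ∀ (i j l k : I) (d e : Option E),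
      A (i, j, d) (l, k, e)
        = if l = j then
            (match e with
              | none => P (Sum.inl j) (Sum.inl k)
              | some ε => P (Sum.inl j) (Sum.inr ε) * μ k)
          else 0)
    (η : I × I × Option E → ℝ)
    (hη : ∀ (i j : I) (d : Option E),
      η (i, j, d)
        = match d with
          | none => μ i * P (Sum.inl i) (Sum.inl j)
          | some δ => μ i * P (Sum.inl i) (Sum.inr δ) * μ j) :
    (∑ x : I × I × Option E, η x * ∑ y : I × I × Option E, negMulLog (A x y))
      = (∑ x : I × I × Bool, ζ x * ∑ y : I × I × Bool, negMulLog (K x y))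
        + ∑ i : I, μ i * (∑ ε : E, P (Sum.inl i) (Sum.inr ε))
            * ∑ δ : E, negMulLog
                (P (Sum.inl i) (Sum.inr δ) / ∑ ε : E, P (Sum.inl i) (Sum.inr ε)) := by

  -- quasi-stationarity, coordinatewise
  have hqsd' : ∀ j, ∑ i, μ i * P (Sum.inl i) (Sum.inl j) = γ * μ j := by
    intro j
    have := congrFun hqsd j
    simpa [Matrix.vecMul, dotProduct, Matrix.submatrix] using this
  have hrow : ∀ i : I, ∑ ε : E, P (Sum.inl i) (Sum.inr ε)
      = 1 - ∑ j, P (Sum.inl i) (Sum.inl j) := by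
    intro i
    have := hP1 (Sum.inl i)
    rw [Fintype.sum_sum_type] at this
    linarith
  have fact2 : ∑ i, μ i * ∑ ε : E, P (Sum.inl i) (Sum.inr ε) = 1 - γ := by
    simp_rw [hrow, mul_sub, mul_one]
    rw [Finset.sum_sub_distrib, hμ1]
    simp_rw [Finset.mul_sum]
    rw [Finset.sum_comm]
    simp_rw [hqsd']
    rw [← Finset.mul_sum, hμ1, mul_one]
  -- marginals
  have margη : ∀ j, ∑ i, ∑ d : Option E, η (i, j, d) = μ j := by
    intro j
    have h1 : ∀ i, ∑ d : Option E, η (i, j, d)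
        = μ i * P (Sum.inl i) (Sum.inl j) + ∑ δ : E, μ i * P (Sum.inl i) (Sum.inr δ) * μ j := by
      intro i
      rw [Fintype.sum_option]
      simp [hη]
    simp_rw [h1]
    rw [Finset.sum_add_distrib, hqsd' j]
    have h2 : ∑ i, ∑ δ : E, μ i * P (Sum.inl i) (Sum.inr δ) * μ j
        = (∑ i, μ i * ∑ ε : E, P (Sum.inl i) (Sum.inr ε)) * μ j := by
      rw [Finset.sum_mul]
      refine Finset.sum_congr rfl fun i _ => ?_
      rw [Finset.mul_sum, Finset.sum_mul]
    rw [h2, fact2]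
    ring
  have margζ : ∀ j, ∑ i, ∑ a : Bool, ζ (i, j, a) = μ j := by
    intro j
    have h1 : ∀ i, ∑ a : Bool, ζ (i, j, a)
        = μ i * P (Sum.inl i) (Sum.inl j)
          + μ i * (∑ ε : E, P (Sum.inl i) (Sum.inr ε)) * μ j := by
      intro i
      rw [Fintype.sum_bool]
      simp [hζ]
    simp_rw [h1]
    rw [Finset.sum_add_distrib, hqsd' j, ← Finset.sum_mul, fact2]
    ring
  -- inner sums
  have innerA : ∀ (i j : I) (d : Option E),
      ∑ y : I × I × Option E, negMulLog (A (i, j, d) y)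
        = ∑ k, (negMulLog (P (Sum.inl j) (Sum.inl k))
            + ∑ ε : E, negMulLog (P (Sum.inl j) (Sum.inr ε) * μ k)) := by
    intro i j d
    rw [Fintype.sum_prod_type]
    rw [Finset.sum_eq_single j
      (fun l _ hl => by simp [Fintype.sum_prod_type, hA, hl])
      (fun h => absurd (Finset.mem_univ j) h)]
    simp [Fintype.sum_prod_type, hA, Fintype.sum_option]
  have innerK : ∀ (i j : I) (a : Bool),
      ∑ y : I × I × Bool, negMulLog (K (i, j, a) y)
        = ∑ k, (negMulLog (P (Sum.inl j) (Sum.inl k))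
            + negMulLog ((∑ ε : E, P (Sum.inl j) (Sum.inr ε)) * μ k)) := by
    intro i j a
    rw [Fintype.sum_prod_type]
    rw [Finset.sum_eq_single j
      (fun l _ hl => by simp [Fintype.sum_prod_type, hK, hl])
      (fun h => absurd (Finset.mem_univ j) h)]
    simp [Fintype.sum_prod_type, hK, Fintype.sum_bool]
  -- reduce both sides to sums over j
  have lhsA : (∑ x : I × I × Option E, η x * ∑ y : I × I × Option E, negMulLog (A x y))
      = ∑ j, μ j * ∑ k, (negMulLog (P (Sum.inl j) (Sum.inl k))
            + ∑ ε : E, negMulLog (P (Sum.inl j) (Sum.inr ε) * μ k)) := by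
    have hx : ∀ x : I × I × Option E,
        η x * ∑ y : I × I × Option E, negMulLog (A x y)
          = η x * ∑ k, (negMulLog (P (Sum.inl x.2.1) (Sum.inl k))
              + ∑ ε : E, negMulLog (P (Sum.inl x.2.1) (Sum.inr ε) * μ k)) := by
      rintro ⟨i, j, d⟩
      rw [innerA i j d]
    simp_rw [hx]
    rw [Fintype.sum_prod_type]
    simp_rw [Fintype.sum_prod_type]
    rw [Finset.sum_comm]
    refine Finset.sum_congr rfl fun j _ => ?_
    rw [← margη j]
    simp_rw [Finset.sum_mul]
  have lhsK : (∑ x : I × I × Bool, ζ x * ∑ y : I × I × Bool, negMulLog (K x y))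
      = ∑ j, μ j * ∑ k, (negMulLog (P (Sum.inl j) (Sum.inl k))
            + negMulLog ((∑ ε : E, P (Sum.inl j) (Sum.inr ε)) * μ k)) := by
    have hx : ∀ x : I × I × Bool,
        ζ x * ∑ y : I × I × Bool, negMulLog (K x y)
          = ζ x * ∑ k, (negMulLog (P (Sum.inl x.2.1) (Sum.inl k))
              + negMulLog ((∑ ε : E, P (Sum.inl x.2.1) (Sum.inr ε)) * μ k)) := by
      rintro ⟨i, j, a⟩
      rw [innerK i j a]
    simp_rw [hx]
    rw [Fintype.sum_prod_type]
    simp_rw [Fintype.sum_prod_type]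
    rw [Finset.sum_comm]
    refine Finset.sum_congr rfl fun j _ => ?_
    rw [← margζ j]
    simp_rw [Finset.sum_mul]
  rw [lhsA, lhsK, ← Finset.sum_add_distrib]
  refine Finset.sum_congr rfl fun j _ => ?_
  have expand : ∀ k, negMulLog (P (Sum.inl j) (Sum.inl k))
        + ∑ ε : E, negMulLog (P (Sum.inl j) (Sum.inr ε) * μ k)
      = (negMulLog (P (Sum.inl j) (Sum.inl k))
          + negMulLog ((∑ ε : E, P (Sum.inl j) (Sum.inr ε)) * μ k))
        + μ k * ((∑ ε : E, negMulLog (P (Sum.inl j) (Sum.inr ε)))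
            - negMulLog (∑ ε : E, P (Sum.inl j) (Sum.inr ε))) := by
    intro k
    simp_rw [nml_mul']
    rw [Finset.sum_add_distrib, ← Finset.mul_sum, ← Finset.sum_mul]
    ring
  simp_rw [expand]
  rw [Finset.sum_add_distrib, ← Finset.sum_mul, hμ1, one_mul]
  have hdiv := div_entropy' (fun ε => P (Sum.inl j) (Sum.inr ε)) (fun ε => hP0 _ _)
  beta_reduce at hdiv
  rw [mul_add, ← hdiv]
  ring
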